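/- Let ‖·‖_d be any norm on ℝ² (all norms on ℝ² are equivalent). If (aᵢ) is a sequence with ‖aᵢ‖_d → 0, then there exists a choice of signs εᵢ ∈ {1,-1} such that ∑ εᵢ aᵢ converges with respect to ‖·‖_d. -/

import Mathlib

open Filter Finset Module

section BG
variable {F : Type*} [NormedAddCommGroup F] [NormedSpace ℝ F]

lemma bg_exists_dep (hdim : Module.finrank ℝ F = 2) (w : Fin 3 → F) :
    ∃ g : Fin 3 → ℝ, ∑ i, g i • w i = 0 ∧ ∃ i, g i ≠ 0 := by
  haveI : FiniteDimensional ℝ F := FiniteDimensional.of_finrank_pos (by omega)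
  rw [← Fintype.not_linearIndependent_iff]
  intro hli
  have := hli.fintype_card_le_finrank
  rw [hdim] at this
  simp at this

lemma term_le_one {α ε : ℕ → ℝ} {v : ℕ → F} {i : ℕ}
    (hα : α i ∈ Set.Icc (0:ℝ) 1) (hε : ε i = 0 ∨ ε i = 1) (hv : ‖v i‖ ≤ 1) :
    ‖(α i - ε i) • v i‖ ≤ 1 := by
  rw [norm_smul]
  obtain ⟨h0, h1⟩ := hα
  have habs : |α i - ε i| ≤ 1 := by
    rcases hε with he | he <;> rw [he, abs_le] <;> constructor <;> linarith
  calc |α i - ε i| * ‖v i‖ ≤ 1 * 1 := by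
        apply mul_le_mul habs hv (norm_nonneg _) (by norm_num)
    _ = 1 := by norm_num

lemma norm_sum_le_card (s : Finset ℕ) (f : ℕ → F) (h : ∀ i ∈ s, ‖f i‖ ≤ 1) :
    ‖∑ i ∈ s, f i‖ ≤ s.card := by
  calc ‖∑ i ∈ s, f i‖ ≤ ∑ i ∈ s, ‖f i‖ := norm_sum_le _ _
    _ ≤ s.card • (1:ℝ) := Finset.sum_le_card_nsmul s _ 1 h
    _ = s.card := by simp

lemma bg_direct (n : ℕ) (v : ℕ → F) (hv : ∀ i < n, ‖v i‖ ≤ 1)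
    (α : ℕ → ℝ) (hα : ∀ i < n, α i ∈ Set.Icc (0:ℝ) 1)
    (hcard : ((Finset.range n).filter (fun i => α i ≠ 0 ∧ α i ≠ 1)).card ≤ 2) :
    ∃ ε : ℕ → ℝ, (∀ i, ε i = 0 ∨ ε i = 1) ∧
      (∀ i < n, (α i = 0 → ε i = 0) ∧ (α i = 1 → ε i = 1)) ∧
      ∀ k ≤ n, ‖∑ i ∈ Finset.range k, (α i - ε i) • v i‖ ≤ 2 := by
  classical
  refine ⟨fun i => if α i = 1 then 1 else 0, fun i => by by_cases h : α i = 1 <;> simp [h], ?_, ?_⟩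
  · intro i _
    constructor
    · intro h0; simp [h0]
    · intro h1; simp [h1]
  · intro k hk
    have hrw : ∑ i ∈ (Finset.range k).filter (fun i => α i ≠ 0 ∧ α i ≠ 1),
        (α i - if α i = 1 then 1 else 0) • v i
        = ∑ i ∈ Finset.range k, (α i - if α i = 1 then 1 else 0) • v i := by
      apply Finset.sum_filter_of_ne
      intro x _ hne
      constructor
      · intro h0; apply hne; simp [h0]
      · intro h1; apply hne; simp [h1]
    rw [← hrw]
    have hsub : (Finset.range k).filter (fun i => α i ≠ 0 ∧ α i ≠ 1)
        ⊆ (Finset.range n).filter (fun i => α i ≠ 0 ∧ α i ≠ 1) :=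
      Finset.filter_subset_filter _ (by
        intro x hx; exact Finset.mem_range.mpr (lt_of_lt_of_le (Finset.mem_range.mp hx) hk))
    calc ‖∑ i ∈ (Finset.range k).filter (fun i => α i ≠ 0 ∧ α i ≠ 1),
            (α i - if α i = 1 then 1 else 0) • v i‖
        ≤ ((Finset.range k).filter (fun i => α i ≠ 0 ∧ α i ≠ 1)).card := by
          apply norm_sum_le_card
          intro i hi
          have hik : i < k := Finset.mem_range.mp (Finset.mem_of_mem_filter i hi)
          exact term_le_one (ε := fun i => if α i = 1 then (1:ℝ) else 0)
            (hα i (lt_of_lt_of_le hik hk))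
            (by by_cases h : α i = 1 <;> simp [h]) (hv i (lt_of_lt_of_le hik hk))
      _ ≤ 2 := by
          have := (Finset.card_le_card hsub).trans hcard
          exact_mod_cast this

set_option maxHeartbeats 1000000 in
lemma bg_aux (hdim : Module.finrank ℝ F = 2)
    (n : ℕ) (v : ℕ → F) (hv : ∀ i < n, ‖v i‖ ≤ 1) :
    ∀ (m : ℕ) (α : ℕ → ℝ), (∀ i < n, α i ∈ Set.Icc (0:ℝ) 1) →
      ((Finset.range n).filter (fun i => α i ≠ 0 ∧ α i ≠ 1)).card ≤ m →
      ∃ ε : ℕ → ℝ, (∀ i, ε i = 0 ∨ ε i = 1) ∧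
        (∀ i < n, (α i = 0 → ε i = 0) ∧ (α i = 1 → ε i = 1)) ∧
        ∀ k ≤ n, ‖∑ i ∈ Finset.range k, (α i - ε i) • v i‖ ≤ 2 := by
  classical
  intro m
  induction m with
  | zero =>
    intro α hα hcard
    exact bg_direct n v hv α hα (hcard.trans (by norm_num))
  | succ m ih =>
    intro α hα hcard
    by_cases hc2 : ((Finset.range n).filter (fun i => α i ≠ 0 ∧ α i ≠ 1)).card ≤ 2
    · exact bg_direct n v hv α hα hc2
    · push_neg at hc2
      set S := (Finset.range n).filter (fun i => α i ≠ 0 ∧ α i ≠ 1) with hSdef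
      have hS : S.Nonempty := Finset.card_pos.mp (by omega)
      set j1 := S.min' hS with hj1def
      have hj1S : j1 ∈ S := S.min'_mem hS
      have hS2 : (S.erase j1).Nonempty := by
        apply Finset.card_pos.mp
        rw [Finset.card_erase_of_mem hj1S]; omega
      set j2 := (S.erase j1).min' hS2 with hj2def
      have hj2E : j2 ∈ S.erase j1 := (S.erase j1).min'_mem hS2
      have hj2S : j2 ∈ S := Finset.mem_of_mem_erase hj2E
      have hj12 : j1 < j2 :=
        lt_of_le_of_ne (S.min'_le j2 hj2S) (Ne.symm (Finset.ne_of_mem_erase hj2E))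
      have hS3 : ((S.erase j1).erase j2).Nonempty := by
        apply Finset.card_pos.mp
        rw [Finset.card_erase_of_mem hj2E, Finset.card_erase_of_mem hj1S]; omega
      set j3 := ((S.erase j1).erase j2).min' hS3 with hj3def
      have hj3E : j3 ∈ (S.erase j1).erase j2 := _root_.Finset.min'_mem _ hS3
      have hj3E1 : j3 ∈ S.erase j1 := Finset.mem_of_mem_erase hj3E
      have hj3S : j3 ∈ S := Finset.mem_of_mem_erase hj3E1
      have hj23 : j2 < j3 :=
        lt_of_le_of_ne ((S.erase j1).min'_le j3 hj3E1) (Ne.symm (Finset.ne_of_mem_erase hj3E))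
      have hj13 : j1 < j3 := hj12.trans hj23
      -- minimality: any element of S below j3 is j1 or j2
      have hmin : ∀ i ∈ S, i < j3 → i = j1 ∨ i = j2 := by
        intro i hiS hij
        by_contra hno
        push_neg at hno
        have hi3 : i ∈ (S.erase j1).erase j2 :=
          Finset.mem_erase.mpr ⟨hno.2, Finset.mem_erase.mpr ⟨hno.1, hiS⟩⟩
        exact absurd (((S.erase j1).erase j2).min'_le i hi3) (not_le.mpr hij)
      have hj1n : j1 < n := Finset.mem_range.mp (Finset.mem_of_mem_filter j1 hj1S)
      have hj2n : j2 < n := Finset.mem_range.mp (Finset.mem_of_mem_filter j2 hj2S)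
      have hj3n : j3 < n := Finset.mem_range.mp (Finset.mem_of_mem_filter j3 hj3S)
      have hfrac : ∀ i ∈ S, α i ≠ 0 ∧ α i ≠ 1 := by
        intro i hiS; exact (Finset.mem_filter.mp hiS).2
      -- a linear dependence
      obtain ⟨g, hg, c0, hc0⟩ := bg_exists_dep hdim ![v j1, v j2, v j3]
      rw [Fin.sum_univ_three] at hg
      simp only [Matrix.cons_val_zero, Matrix.cons_val_one, Matrix.head_cons,
        Matrix.cons_val_two, Matrix.tail_cons] at hg
      -- the stepping amount
      set T : Finset (Fin 3) := Finset.univ.filter (fun c => g c ≠ 0) with hTdef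
      have hT : T.Nonempty := ⟨c0, Finset.mem_filter.mpr ⟨Finset.mem_univ _, hc0⟩⟩
      set J : Fin 3 → ℕ := ![j1, j2, j3] with hJdef
      have hJ0 : J 0 = j1 := rfl
      have hJ1 : J 1 = j2 := rfl
      have hJ2 : J 2 = j3 := rfl
      have hJS : ∀ c, J c ∈ S := by
        intro c; fin_cases c
        · exact hj1S
        · exact hj2S
        · exact hj3S
      have hJn : ∀ c, J c < n := fun c => Finset.mem_range.mp (Finset.mem_of_mem_filter _ (hJS c))
      set f : Fin 3 → ℝ := fun c => if 0 < g c then (1 - α (J c)) / g c else α (J c) / (-g c)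
        with hfdef
      set t := T.inf' hT f with htdef
      have ht0 : 0 ≤ t := by
        apply Finset.le_inf'
        intro c hc
        have hαc := hα (J c) (hJn c)
        by_cases hgc : 0 < g c
        · rw [hfdef]; simp only [if_pos hgc]
          exact div_nonneg (by linarith [hαc.2]) hgc.le
        · have hgc' : g c ≠ 0 := (Finset.mem_filter.mp hc).2
          have : g c < 0 := lt_of_le_of_ne (not_lt.mp hgc) hgc'
          rw [hfdef]; simp only [if_neg hgc]
          exact div_nonneg hαc.1 (by linarith)
      obtain ⟨i0, hi0T, hti0⟩ := Finset.exists_mem_eq_inf' hT f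
      have hgi0 : g i0 ≠ 0 := (Finset.mem_filter.mp hi0T).2
      -- core bounds
      have hcore : ∀ c : Fin 3, 0 ≤ α (J c) + t * g c ∧ α (J c) + t * g c ≤ 1 := by
        intro c
        have hαc := hα (J c) (hJn c)
        rcases lt_trichotomy (g c) 0 with hgc | hgc | hgc
        · have hcT : c ∈ T := Finset.mem_filter.mpr ⟨Finset.mem_univ _, hgc.ne⟩
          have htc : t ≤ f c := Finset.inf'_le f hcT
          rw [hfdef] at htc
          simp only [if_neg (not_lt.mpr hgc.le)] at htc
          have h2 : t * (-g c) ≤ α (J c) := (le_div_iff₀ (by linarith)).mp htc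
          constructor <;> nlinarith [hαc.1, hαc.2, mul_nonpos_of_nonneg_of_nonpos ht0 hgc.le]
        · rw [hgc]; constructor <;> [linarith [hαc.1]; linarith [hαc.2]]
        · have hcT : c ∈ T := Finset.mem_filter.mpr ⟨Finset.mem_univ _, hgc.ne'⟩
          have htc : t ≤ f c := Finset.inf'_le f hcT
          rw [hfdef] at htc
          simp only [if_pos hgc] at htc
          have h2 : t * g c ≤ 1 - α (J c) := (le_div_iff₀ hgc).mp htc
          constructor <;> nlinarith [hαc.1, hαc.2, mul_nonneg ht0 hgc.le]
      -- the shifted coefficients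
      set δ : ℕ → ℝ := fun i =>
        if i = j1 then g 0 else if i = j2 then g 1 else if i = j3 then g 2 else 0 with hδdef
      have hδ1 : δ j1 = g 0 := by simp [hδdef]
      have hδ2 : δ j2 = g 1 := by simp [hδdef, hj12.ne']
      have hδ3 : δ j3 = g 2 := by simp [hδdef, hj13.ne', hj23.ne']
      have hδJ : ∀ c, δ (J c) = g c := by
        intro c
        fin_cases c
        · simpa [hJdef] using hδ1
        · simpa [hJdef] using hδ2
        · simpa [hJdef] using hδ3
      have hδ0 : ∀ i, i ≠ j1 → i ≠ j2 → i ≠ j3 → δ i = 0 := by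
        intro i h1 h2 h3; simp [hδdef, h1, h2, h3]
      set α' : ℕ → ℝ := fun i => α i + t * δ i with hα'def
      have hα'J : ∀ c, α' (J c) = α (J c) + t * g c := by
        intro c; rw [hα'def]; simp only; rw [hδJ c]
      have hα'other : ∀ i, i ≠ j1 → i ≠ j2 → i ≠ j3 → α' i = α i := by
        intro i h1 h2 h3; rw [hα'def]; simp only; rw [hδ0 i h1 h2 h3]; ring
      have hα'Icc : ∀ i < n, α' i ∈ Set.Icc (0:ℝ) 1 := by
        intro i hi
        by_cases e1 : i = j1
        · subst e1; rw [← hJ0, hα'J 0]; exact ⟨(hcore 0).1, (hcore 0).2⟩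
        · by_cases e2 : i = j2
          · subst e2; rw [← hJ1, hα'J 1]; exact ⟨(hcore 1).1, (hcore 1).2⟩
          · by_cases e3 : i = j3
            · subst e3; rw [← hJ2, hα'J 2]; exact ⟨(hcore 2).1, (hcore 2).2⟩
            · rw [hα'other i e1 e2 e3]; exact hα i hi
      -- the coordinate that becomes integral
      have hnew : α' (J i0) = 0 ∨ α' (J i0) = 1 := by
        rw [hα'J i0]
        rcases lt_or_gt_of_ne hgi0 with hneg | hpos
        · left
          rw [htdef, hti0, hfdef]
          simp only [if_neg (not_lt.mpr hneg.le)]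
          field_simp [hgi0]
          ring
        · right
          rw [htdef, hti0, hfdef]
          simp only [if_pos hpos]
          field_simp [hgi0]
          ring
      -- the new fractional set is smaller
      have hS'sub : (Finset.range n).filter (fun i => α' i ≠ 0 ∧ α' i ≠ 1)
          ⊆ S.erase (J i0) := by
        intro i hi'
        obtain ⟨hin, hf1, hf2⟩ := Finset.mem_filter.mp hi'
        refine Finset.mem_erase.mpr ⟨?_, ?_⟩
        · intro he; rw [he] at hf1 hf2
          rcases hnew with h | h
          · exact hf1 h
          · exact hf2 h
        · by_cases e1 : i = j1
          · rw [e1]; exact hj1S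
          · by_cases e2 : i = j2
            · rw [e2]; exact hj2S
            · by_cases e3 : i = j3
              · rw [e3]; exact hj3S
              · have := hα'other i e1 e2 e3
                rw [this] at hf1 hf2
                exact Finset.mem_filter.mpr ⟨hin, hf1, hf2⟩
      have hcard' : ((Finset.range n).filter (fun i => α' i ≠ 0 ∧ α' i ≠ 1)).card ≤ m := by
        have h1 := Finset.card_le_card hS'sub
        rw [Finset.card_erase_of_mem (hJS i0)] at h1
        omega
      obtain ⟨ε, hε01, hεm, hεb⟩ := ih α' hα'Icc hcard'
      -- matching on integral coordinates of α
      have hmatch : ∀ i < n, (α i = 0 → ε i = 0) ∧ (α i = 1 → ε i = 1) := by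
        intro i hi
        have hiS : (α i = 0 ∨ α i = 1) → i ∉ S := by
          intro hint hiS
          rcases hint with h | h
          · exact (hfrac i hiS).1 h
          · exact (hfrac i hiS).2 h
        have htriple : (α i = 0 ∨ α i = 1) → α' i = α i := by
          intro hint
          have hiS' := hiS hint
          have e1 : i ≠ j1 := fun he => hiS' (he ▸ hj1S)
          have e2 : i ≠ j2 := fun he => hiS' (he ▸ hj2S)
          have e3 : i ≠ j3 := fun he => hiS' (he ▸ hj3S)
          exact hα'other i e1 e2 e3
        constructor
        · intro h0
          exact (hεm i hi).1 (by rw [htriple (Or.inl h0), h0])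
        · intro h1
          exact (hεm i hi).2 (by rw [htriple (Or.inr h1), h1])
      refine ⟨ε, hε01, hmatch, ?_⟩
      intro k hk
      by_cases hkj : j3 < k
      · -- the move is invisible for long prefixes
        have hsum0 : ∑ i ∈ Finset.range k, (t * δ i) • v i = 0 := by
          have hstep1 : ∑ i ∈ Finset.range k, (t * δ i) • v i
              = t • ∑ i ∈ Finset.range k, δ i • v i := by
            rw [Finset.smul_sum]
            exact Finset.sum_congr rfl fun i _ => by rw [mul_smul]
          have htr : ({j1, j2, j3} : Finset ℕ) ⊆ Finset.range k := by
            intro i hi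
            simp only [Finset.mem_insert, Finset.mem_singleton] at hi
            rcases hi with h | h | h <;> subst h <;> apply Finset.mem_range.mpr <;> omega
          have hstep2 : ∑ i ∈ Finset.range k, δ i • v i
              = ∑ i ∈ ({j1, j2, j3} : Finset ℕ), δ i • v i := by
            symm
            apply Finset.sum_subset htr
            intro i _ hni
            simp only [Finset.mem_insert, Finset.mem_singleton, not_or] at hni
            rw [hδ0 i hni.1 hni.2.1 hni.2.2, zero_smul]
          have hne12 : j1 ∉ ({j2, j3} : Finset ℕ) := by
            simp [hj12.ne, hj13.ne]
          have hne23 : j2 ∉ ({j3} : Finset ℕ) := by simp [hj23.ne]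
          have hstep3 : ∑ i ∈ ({j1, j2, j3} : Finset ℕ), δ i • v i
              = δ j1 • v j1 + (δ j2 • v j2 + δ j3 • v j3) := by
            rw [Finset.sum_insert hne12, Finset.sum_insert hne23, Finset.sum_singleton]
          rw [hstep1, hstep2, hstep3, hδ1, hδ2, hδ3]
          rw [show g 0 • v j1 + (g 1 • v j2 + g 2 • v j3)
            = g 0 • v j1 + g 1 • v j2 + g 2 • v j3 by abel, hg, smul_zero]
        have hre : ∀ i ∈ Finset.range k, (α i - ε i) • v i
            = (α' i - ε i) • v i - (t * δ i) • v i := by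
          intro i _
          rw [← sub_smul]
          congr 1
          rw [hα'def]; ring
        rw [Finset.sum_congr rfl hre, Finset.sum_sub_distrib, hsum0, sub_zero]
        exact hεb k hk
      · -- short prefixes: at most two nonzero terms
        push_neg at hkj
        have hterm0 : ∀ i ∈ Finset.range k, (α i - ε i) • v i ≠ 0 → (i = j1 ∨ i = j2) := by
          intro i hik hne
          by_contra hno
          push_neg at hno
          have hik' : i < k := Finset.mem_range.mp hik
          have hin : i < n := lt_of_lt_of_le hik' hk
          have hiS : i ∉ S := by
            intro hiS
            have hij3 : i < j3 := lt_of_lt_of_le hik' hkj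
            rcases hmin i hiS hij3 with h | h
            · exact hno.1 h
            · exact hno.2 h
          have hint : α i = 0 ∨ α i = 1 := by
            by_contra hni
            push_neg at hni
            exact hiS (Finset.mem_filter.mpr ⟨Finset.mem_range.mpr hin, hni.1, hni.2⟩)
          apply hne
          rcases hint with h | h
          · rw [h, (hmatch i hin).1 h]; simp
          · rw [h, (hmatch i hin).2 h]; simp
        have hrw : ∑ i ∈ (Finset.range k).filter (fun i => i = j1 ∨ i = j2),
            (α i - ε i) • v i = ∑ i ∈ Finset.range k, (α i - ε i) • v i :=
          Finset.sum_filter_of_ne hterm0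
        rw [← hrw]
        have hsub2 : (Finset.range k).filter (fun i => i = j1 ∨ i = j2)
            ⊆ ({j1, j2} : Finset ℕ) := by
          intro i hi
          rcases (Finset.mem_filter.mp hi).2 with h | h <;> simp [h]
        calc ‖∑ i ∈ (Finset.range k).filter (fun i => i = j1 ∨ i = j2), (α i - ε i) • v i‖
            ≤ ((Finset.range k).filter (fun i => i = j1 ∨ i = j2)).card := by
              apply norm_sum_le_card
              intro i hi
              have hik : i < k := Finset.mem_range.mp (Finset.mem_of_mem_filter i hi)
              exact term_le_one (hα i (lt_of_lt_of_le hik hk)) (hε01 i)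
                (hv i (lt_of_lt_of_le hik hk))
          _ ≤ 2 := by
              have h1 := Finset.card_le_card hsub2
              have h2 : ({j1, j2} : Finset ℕ).card ≤ 2 :=
                (Finset.card_insert_le _ _).trans (by simp)
              exact_mod_cast h1.trans h2

lemma bg_signs (hdim : Module.finrank ℝ F = 2) (n : ℕ) (w : ℕ → F) (b : ℝ) (hb : 0 < b)
    (hw : ∀ i < n, ‖w i‖ ≤ b) :
    ∃ σ : ℕ → ℝ, (∀ i, σ i = 1 ∨ σ i = -1) ∧
      ∀ k ≤ n, ‖∑ i ∈ Finset.range k, σ i • w i‖ ≤ 4 * b := by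
  have hv : ∀ i < n, ‖b⁻¹ • w i‖ ≤ 1 := by
    intro i hi
    rw [norm_smul, Real.norm_eq_abs, abs_of_pos (inv_pos.mpr hb)]
    calc b⁻¹ * ‖w i‖ ≤ b⁻¹ * b := by
          apply mul_le_mul_of_nonneg_left (hw i hi) (inv_pos.mpr hb).le
      _ = 1 := inv_mul_cancel₀ hb.ne'
  obtain ⟨ε, hε01, -, hεb⟩ := bg_aux hdim n (fun i => b⁻¹ • w i) hv n (fun _ => (1:ℝ)/2)
    (fun i _ => by norm_num) ((Finset.card_filter_le _ _).trans (by simp))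
  refine ⟨fun i => 1 - 2 * ε i, ?_, ?_⟩
  · intro i
    rcases hε01 i with h | h
    · left; norm_num [h]
    · right; norm_num [h]
  · intro k hk
    have hrw : ∑ i ∈ Finset.range k, (1 - 2 * ε i) • w i
        = (2 * b) • ∑ i ∈ Finset.range k, ((1:ℝ)/2 - ε i) • (b⁻¹ • w i) := by
      rw [Finset.smul_sum]
      apply Finset.sum_congr rfl
      intro i _
      rw [smul_smul, smul_smul]
      congr 1
      field_simp
    rw [hrw, norm_smul, Real.norm_eq_abs, abs_of_pos (by linarith)]
    calc 2 * b * ‖∑ i ∈ Finset.range k, ((1:ℝ)/2 - ε i) • (b⁻¹ • w i)‖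
        ≤ 2 * b * 2 := by
          apply mul_le_mul_of_nonneg_left (hεb k hk) (by linarith)
      _ = 4 * b := by ring

end BG

theorem stmt10 (F : Type*) [NormedAddCommGroup F] [NormedSpace ℝ F]
    (hdim : Module.finrank ℝ F = 2)
    (a : ℕ → F) (h : Tendsto (fun n => ‖a n‖) atTop (nhds 0)) :
    ∃ ε : ℕ → ℝ, (∀ i, ε i = 1 ∨ ε i = -1) ∧
      ∃ l, Tendsto (fun N => ∑ i ∈ Finset.range N, ε i • a i) atTop (nhds l) := by
  classical
  haveI : FiniteDimensional ℝ F := FiniteDimensional.of_finrank_pos (by omega)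
  -- thresholds
  have hth : ∀ k : ℕ, ∃ M : ℕ, ∀ n ≥ M, ‖a n‖ ≤ (1/2 : ℝ)^k := by
    intro k
    have hpos : (0:ℝ) < (1/2)^k := by positivity
    have hev : ∀ᶠ n in atTop, ‖a n‖ ≤ (1/2 : ℝ)^k :=
      h.eventually (eventually_le_nhds hpos)
    exact eventually_atTop.mp hev
  choose M hM using hth
  -- block boundaries
  obtain ⟨N, hN0, hNs⟩ : ∃ N : ℕ → ℕ, N 0 = M 0 ∧ ∀ k, N (k+1) = max (N k + 1) (M (k+1)) :=
    ⟨fun k => Nat.rec (M 0) (fun k Nk => max (Nk + 1) (M (k+1))) k, rfl, fun k => rfl⟩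
  have hNsucc : ∀ k, N k < N (k+1) := by
    intro k
    rw [hNs]
    exact lt_of_lt_of_le (Nat.lt_succ_self _) (le_max_left _ _)
  have hNM : ∀ k, M k ≤ N k := by
    intro k
    cases k with
    | zero => rw [hN0]
    | succ k => rw [hNs]; exact le_max_right _ _
  have hNa : ∀ k, ∀ i, N k ≤ i → ‖a i‖ ≤ (1/2 : ℝ)^k :=
    fun k i hi => hM k i (le_trans (hNM k) hi)
  have hNmono : Monotone N := monotone_nat_of_le_succ (fun k => (hNsucc k).le)
  have hNge : ∀ k, k ≤ N k := by
    intro k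
    induction k with
    | zero => exact Nat.zero_le _
    | succ k ihk => exact lt_of_le_of_lt ihk (hNsucc k)
  -- signs inside each block
  have hblock : ∀ k, ∃ σ : ℕ → ℝ, (∀ i, σ i = 1 ∨ σ i = -1) ∧
      ∀ m ≤ N (k+1) - N k, ‖∑ i ∈ Finset.range m, σ i • a (N k + i)‖ ≤ 4 * (1/2:ℝ)^k := by
    intro k
    apply bg_signs hdim (N (k+1) - N k) (fun i => a (N k + i)) ((1/2:ℝ)^k) (by positivity)
    intro i _
    exact hNa k (N k + i) (Nat.le_add_right _ _)
  choose σ hσ1 hσ2 using hblock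
  -- global signs
  let K : ℕ → ℕ := fun i => Nat.findGreatest (fun k => N k ≤ i) i
  set ε : ℕ → ℝ := fun i => σ (K i) (i - N (K i)) with hεdef
  have hKspec : ∀ i k, N k ≤ i → i < N (k+1) → K i = k := by
    intro i k h1 h2
    have hk_le : k ≤ K i := Nat.le_findGreatest (le_trans (hNge k) h1) h1
    have hk_ge : K i ≤ k := by
      by_contra hlt
      push_neg at hlt
      have h3 : N (K i) ≤ i :=
        Nat.findGreatest_spec (P := fun k => N k ≤ i) (le_trans (hNge k) h1) h1
      exact absurd (le_trans (hNmono hlt) h3) (not_le.mpr h2)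
    omega
  have hεblock : ∀ k p, N k ≤ p → p ≤ N (k+1) →
      ‖∑ i ∈ Finset.Ico (N k) p, ε i • a i‖ ≤ 4 * (1/2:ℝ)^k := by
    intro k p h1 h2
    rw [Finset.sum_Ico_eq_sum_range]
    have hcongr : ∀ j ∈ Finset.range (p - N k),
        ε (N k + j) • a (N k + j) = σ k j • a (N k + j) := by
      intro j hj
      have hj' : j < p - N k := Finset.mem_range.mp hj
      have hi1 : N k ≤ N k + j := Nat.le_add_right _ _
      have hi2 : N k + j < N (k+1) := lt_of_lt_of_le (by omega) h2
      have hK : K (N k + j) = k := hKspec _ _ hi1 hi2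
      show σ (K (N k + j)) (N k + j - N (K (N k + j))) • a (N k + j) = _
      rw [hK, Nat.add_sub_cancel_left]
    rw [Finset.sum_congr rfl hcongr]
    exact hσ2 k (p - N k) (by omega)
  have hint : ∀ j k p, N k ≤ p → p ≤ N (k + j) →
      ‖∑ i ∈ Finset.Ico (N k) p, ε i • a i‖ ≤ 8 * (1/2:ℝ)^k := by
    intro j
    induction j with
    | zero =>
      intro k p h1 h2
      have : p = N k := le_antisymm h2 h1
      subst this
      rw [Finset.Ico_self, Finset.sum_empty, norm_zero]
      positivity
    | succ j ihj =>
      intro k p h1 h2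
      by_cases hc : p ≤ N (k+1)
      · have := hεblock k p h1 hc
        have hpos : (0:ℝ) < (1/2)^k := by positivity
        linarith
      · push_neg at hc
        have hsplit : ∑ i ∈ Finset.Ico (N k) p, ε i • a i
            = ∑ i ∈ Finset.Ico (N k) (N (k+1)), ε i • a i
              + ∑ i ∈ Finset.Ico (N (k+1)) p, ε i • a i :=
          (Finset.sum_Ico_consecutive _ (hNsucc k).le hc.le).symm
        have e1 := hεblock k (N (k+1)) (hNsucc k).le le_rfl
        have e2 := ihj (k+1) p hc.le (by rw [show k+1+j = k+(j+1) by omega]; exact h2)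
        have hpow : (1/2:ℝ)^(k+1) = (1/2)^k * (1/2) := pow_succ _ _
        calc ‖∑ i ∈ Finset.Ico (N k) p, ε i • a i‖
            ≤ ‖∑ i ∈ Finset.Ico (N k) (N (k+1)), ε i • a i‖
              + ‖∑ i ∈ Finset.Ico (N (k+1)) p, ε i • a i‖ := by
              rw [hsplit]; exact norm_add_le _ _
          _ ≤ 4 * (1/2:ℝ)^k + 8 * (1/2:ℝ)^(k+1) := add_le_add e1 e2
          _ = 8 * (1/2:ℝ)^k := by rw [hpow]; ring
  refine ⟨ε, ?_, ?_⟩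
  · intro i
    exact hσ1 (K i) (i - N (K i))
  · apply cauchySeq_tendsto_of_complete
    rw [Metric.cauchySeq_iff']
    intro d hd
    obtain ⟨k, hk⟩ : ∃ k : ℕ, (8:ℝ) * (1/2)^k < d := by
      obtain ⟨k, hk⟩ := exists_pow_lt_of_lt_one (show (0:ℝ) < d/8 by linarith) (by norm_num : (1/2:ℝ) < 1)
      exact ⟨k, by linarith⟩
    refine ⟨N k, fun n hn => ?_⟩
    rw [dist_eq_norm, ← Finset.sum_Ico_eq_sub _ hn]
    obtain ⟨j, hj⟩ : ∃ j, n ≤ N (k + j) := ⟨n, le_trans (by omega) (hNge (k + n))⟩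
    exact lt_of_le_of_lt (hint j k n hn hj) hk
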